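/- The response is a strictly increasing continuous function of the stimulus: the map sending c > 0 to the unique y*(c) ∈ (0, ξ_0) with ψ_0(y*(c)) = c is strictly increasing and continuous on (0, ∞), and y*(c) → ξ_0 as c → ∞; hence ξ_0 is the least upper bound of all attainable responses (the maximal response). -/

import Mathlib

open Filter Set Topology

theorem stmt7
    (M : ℕ) (hM : 2 ≤ M)
    (d : ℝ) (hd : 0 < d)
    (u v w : ℕ → ℝ)
    (hu : ∀ m, 1 ≤ m → m ≤ M - 1 → 0 < u m)
    (hv : ∀ m, 1 ≤ m → m ≤ M - 1 → 0 < v m)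
    (hw : ∀ m, 1 ≤ m → m ≤ M - 1 → 0 < w m)
    (S lam mu : ℕ → ℝ)
    (hS : ∀ m, 1 ≤ m → m ≤ M → 0 < S m)
    (hlam : ∀ m, 1 ≤ m → m ≤ M → 0 < lam m)
    (hmu : ∀ m, 1 ≤ m → m ≤ M → 0 < mu m)
    (ψ : ℕ → ℝ → ℝ)
    (hψM : ∀ y, ψ M y = y)
    (hψrec : ∀ m, 2 ≤ m → m ≤ M → ∀ y,
      ψ (m - 1) y = d * (v (m - 1) / w (m - 1) + 1) * y /
        (u (m - 1) * (S m - lam m * y - mu m * ψ m y)))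
    (hψ0 : ∀ y, ψ 0 y = d * y / (S 1 - lam 1 * y - mu 1 * ψ 1 y))
    (ξ : ℕ → ℝ)
    (hξpos : ∀ m, 0 ≤ m → m ≤ M - 1 → 0 < ξ m)
    (hξlt : ∀ m, 0 ≤ m → m + 1 ≤ M - 1 → ξ m < ξ (m + 1))
    (hξzero : ∀ m, 0 ≤ m → m ≤ M - 1 →
      S (m + 1) - lam (m + 1) * ξ m - mu (m + 1) * ψ (m + 1) (ξ m) = 0)
    (hξuniq : ∀ m, 0 ≤ m → m ≤ M - 1 → ∀ y, 0 < y → (m + 1 ≤ M - 1 → y < ξ (m + 1)) →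
      S (m + 1) - lam (m + 1) * y - mu (m + 1) * ψ (m + 1) y = 0 → y = ξ m) :
    ∀ Y : ℝ → ℝ,
      (∀ c, 0 < c → Y c ∈ Set.Ioo 0 (ξ 0) ∧ ψ 0 (Y c) = c) →
      StrictMonoOn Y (Set.Ioi 0) ∧ ContinuousOn Y (Set.Ioi 0) ∧
      Tendsto Y atTop (𝓝 (ξ 0)) ∧ IsLUB (Y '' Set.Ioi 0) (ξ 0) := by
  -- Key downward induction: ψ m is monotone and nonnegative on [0, ξ (m-1)]
  have key : ∀ j m, 1 ≤ m → m + j = M →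
      MonotoneOn (ψ m) (Icc 0 (ξ (m - 1))) ∧ ∀ y ∈ Icc 0 (ξ (m - 1)), 0 ≤ ψ m y := by
    intro j
    induction j with
    | zero =>
      intro m hm1 hmM
      simp only [Nat.add_zero] at hmM
      subst hmM
      constructor
      · intro a _ b _ hab
        rw [hψM, hψM]; exact hab
      · intro y hy
        rw [hψM]; exact hy.1
    | succ j ih =>
      intro m hm1 hmM
      have hmM' : (m + 1) + j = M := by omega
      obtain ⟨ihmono, ihnn⟩ := ih (m + 1) (by omega) hmM'
      simp only [Nat.add_sub_cancel] at ihmono ihnn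
      have hmle : m ≤ M - 1 := by omega
      have hmle' : m + 1 ≤ M := by omega
      have hlam' : 0 < lam (m + 1) := hlam (m + 1) (by omega) hmle'
      have hmu' : 0 < mu (m + 1) := hmu (m + 1) (by omega) hmle'
      have hu' : 0 < u m := hu m hm1 hmle
      have hv' : 0 < v m := hv m hm1 hmle
      have hw' : 0 < w m := hw m hm1 hmle
      have hξm : 0 < ξ m := hξpos m (Nat.zero_le _) hmle
      -- denominator g is strictly antitone on [0, ξ m], zero at ξ m, positive before
      set g : ℝ → ℝ := fun y => S (m + 1) - lam (m + 1) * y - mu (m + 1) * ψ (m + 1) y with hg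
      have ganti : ∀ a ∈ Icc (0:ℝ) (ξ m), ∀ b ∈ Icc (0:ℝ) (ξ m), a ≤ b → g b ≤ g a := by
        intro a ha b hb hab
        have h1 : lam (m + 1) * a ≤ lam (m + 1) * b :=
          mul_le_mul_of_nonneg_left hab hlam'.le
        have h2 : mu (m + 1) * ψ (m + 1) a ≤ mu (m + 1) * ψ (m + 1) b :=
          mul_le_mul_of_nonneg_left (ihmono ha hb hab) hmu'.le
        simp only [hg]; linarith
      have gzero : g (ξ m) = 0 := hξzero m (Nat.zero_le _) hmle
      have gpos : ∀ y ∈ Icc (0:ℝ) (ξ m), y < ξ m → 0 < g y := by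
        intro y hy hylt
        have h1 : lam (m + 1) * y < lam (m + 1) * ξ m :=
          mul_lt_mul_of_pos_left hylt hlam'
        have h2 : mu (m + 1) * ψ (m + 1) y ≤ mu (m + 1) * ψ (m + 1) (ξ m) :=
          mul_le_mul_of_nonneg_left (ihmono hy (right_mem_Icc.2 hξm.le) hylt.le) hmu'.le
        have := gzero
        simp only [hg] at this ⊢
        linarith
      -- ψ m y = K * y / (u m * g y)
      have hrec : ∀ y, ψ m y = d * (v m / w m + 1) * y / (u m * g y) := by
        intro y
        have := hψrec (m + 1) (by omega) hmle' y
        simpa using this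
      have hK : 0 < d * (v m / w m + 1) := by positivity
      -- ξ (m-1) < ξ m
      have hmm : m - 1 + 1 = m := Nat.succ_pred_eq_of_pos hm1
      have hsub : Icc (0:ℝ) (ξ (m - 1)) ⊆ Icc 0 (ξ m) ∩ Iio (ξ m) := by
        have hlt : ξ (m - 1) < ξ m := by
          have h := hξlt (m - 1) (Nat.zero_le _) (by omega)
          rwa [hmm] at h
        intro y hy
        exact ⟨⟨hy.1, hy.2.trans hlt.le⟩, lt_of_le_of_lt hy.2 hlt⟩
      constructor
      · intro a ha b hb hab
        obtain ⟨ha', halt⟩ := hsub ha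
        obtain ⟨hb', hblt⟩ := hsub hb
        rw [hrec a, hrec b]
        have hga : 0 < g a := gpos a ha' halt
        have hgb : 0 < g b := gpos b hb' hblt
        exact div_le_div₀ (mul_nonneg hK.le hb.1)
          (mul_le_mul_of_nonneg_left hab hK.le)
          (mul_pos hu' hgb)
          (mul_le_mul_of_nonneg_left (ganti a ha' b hb' hab) hu'.le)
      · intro y hy
        obtain ⟨hy', hylt⟩ := hsub hy
        rw [hrec y]
        have hgy : 0 < g y := gpos y hy' hylt
        exact div_nonneg (mul_nonneg hK.le hy.1) (mul_pos hu' hgy).le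
  -- Apply at m = 1
  obtain ⟨ψ1mono, ψ1nn⟩ := key (M - 1) 1 le_rfl (by omega)
  simp only [Nat.sub_self] at ψ1mono ψ1nn
  have hξ0 : 0 < ξ 0 := hξpos 0 (le_rfl) (by omega)
  have hlam1 : 0 < lam 1 := hlam 1 le_rfl (by omega)
  have hmu1 : 0 < mu 1 := hmu 1 le_rfl (by omega)
  set g0 : ℝ → ℝ := fun y => S 1 - lam 1 * y - mu 1 * ψ 1 y with hg0
  have g0zero : g0 (ξ 0) = 0 := hξzero 0 le_rfl (by omega)
  have g0anti : ∀ a ∈ Icc (0:ℝ) (ξ 0), ∀ b ∈ Icc (0:ℝ) (ξ 0), a ≤ b → g0 b ≤ g0 a := by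
    intro a ha b hb hab
    have h1 : lam 1 * a ≤ lam 1 * b := mul_le_mul_of_nonneg_left hab hlam1.le
    have h2 : mu 1 * ψ 1 a ≤ mu 1 * ψ 1 b :=
      mul_le_mul_of_nonneg_left (ψ1mono ha hb hab) hmu1.le
    simp only [hg0]; linarith
  have g0pos : ∀ y ∈ Icc (0:ℝ) (ξ 0), y < ξ 0 → 0 < g0 y := by
    intro y hy hylt
    have h1 : lam 1 * y < lam 1 * ξ 0 := mul_lt_mul_of_pos_left hylt hlam1
    have h2 : mu 1 * ψ 1 y ≤ mu 1 * ψ 1 (ξ 0) :=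
      mul_le_mul_of_nonneg_left (ψ1mono hy (right_mem_Icc.2 hξ0.le) hylt.le) hmu1.le
    have := g0zero
    simp only [hg0] at this ⊢
    linarith
  have hψ0' : ∀ y, ψ 0 y = d * y / g0 y := fun y => hψ0 y
  -- ψ 0 is positive and strictly monotone on (0, ξ 0)
  have ψ0pos : ∀ y ∈ Ioo (0:ℝ) (ξ 0), 0 < ψ 0 y := by
    intro y hy
    rw [hψ0' y]
    exact div_pos (mul_pos hd hy.1) (g0pos y ⟨hy.1.le, hy.2.le⟩ hy.2)
  have ψ0strict : StrictMonoOn (ψ 0) (Ioo (0:ℝ) (ξ 0)) := by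
    intro a ha b hb hab
    rw [hψ0' a, hψ0' b]
    have hga : 0 < g0 a := g0pos a ⟨ha.1.le, ha.2.le⟩ ha.2
    have hgb : 0 < g0 b := g0pos b ⟨hb.1.le, hb.2.le⟩ hb.2
    exact div_lt_div₀ (mul_lt_mul_of_pos_left hab hd)
      (g0anti a ⟨ha.1.le, ha.2.le⟩ b ⟨hb.1.le, hb.2.le⟩ hab.le)
      (mul_nonneg hd.le hb.1.le) hgb
  -- Main conclusions
  intro Y hY
  have hY1 : ∀ c, 0 < c → Y c ∈ Ioo (0:ℝ) (ξ 0) := fun c hc => (hY c hc).1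
  have hY2 : ∀ c, 0 < c → ψ 0 (Y c) = c := fun c hc => (hY c hc).2
  have Ymono : StrictMonoOn Y (Ioi (0:ℝ)) := by
    intro c1 hc1 c2 hc2 h12
    refine (ψ0strict.lt_iff_lt (hY1 c1 hc1) (hY1 c2 hc2)).1 ?_
    rw [hY2 c1 hc1, hY2 c2 hc2]
    exact h12
  have Yimage : Y '' Ioi 0 = Ioo (0:ℝ) (ξ 0) := by
    apply Subset.antisymm
    · rintro _ ⟨c, hc, rfl⟩
      exact hY1 c hc
    · intro y hy
      have hc : 0 < ψ 0 y := ψ0pos y hy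
      refine ⟨ψ 0 y, hc, ?_⟩
      have h1 : Y (ψ 0 y) ∈ Ioo (0:ℝ) (ξ 0) := hY1 _ hc
      have h2 : ψ 0 (Y (ψ 0 y)) = ψ 0 y := hY2 _ hc
      exact ψ0strict.injOn h1 hy h2
  refine ⟨Ymono, ?_, ?_, ?_⟩
  · -- continuity
    intro c hc
    have : ContinuousAt Y c := by
      apply Ymono.continuousAt_of_image_mem_nhds (isOpen_Ioi.mem_nhds hc)
      rw [Yimage]
      exact isOpen_Ioo.mem_nhds (hY1 c hc)
    exact this.continuousWithinAt
  · -- tendsto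
    rw [tendsto_order]
    constructor
    · intro a ha
      set y : ℝ := max a (ξ 0 / 2) with hy
      have hy1 : 0 < y := lt_max_of_lt_right (by linarith)
      have hy2 : y < ξ 0 := max_lt ha (by linarith)
      have hymem : y ∈ Ioo (0:ℝ) (ξ 0) := ⟨hy1, hy2⟩
      filter_upwards [eventually_gt_atTop (ψ 0 y), eventually_gt_atTop 0] with c hc hc0
      have h1 : ψ 0 y < ψ 0 (Y c) := by rw [hY2 c hc0]; exact hc
      have h2 : y < Y c := (ψ0strict.lt_iff_lt hymem (hY1 c hc0)).1 h1
      exact lt_of_le_of_lt (le_max_left a _) h2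
    · intro b hb
      filter_upwards [eventually_gt_atTop 0] with c hc0
      exact lt_trans (hY1 c hc0).2 hb
  · rw [Yimage]
    exact isLUB_Ioo hξ0
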